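/- The action of the generators π_i (1 ≤ i ≤ n−1) on the ℂ-span of standard immaculate tableaux of shape α given by: π_i·𝒯 = 𝒯 if i is not a descent of 𝒯; π_i·𝒯 = 0 if i and i+1 both lie in the first column of 𝒯; and π_i·𝒯 = s_i·𝒯 otherwise, satisfies the defining relations of H_n(0), hence defines an H_n(0)-module 𝒱_α. -/

import Mathlib

/-- Index set `{1, …, n-1}` for the generators of `H_n(0)` and for the simple
transpositions of `S_n`. -/
def HIdx (n : ℕ) := {i : ℕ // 1 ≤ i ∧ i + 1 ≤ n}

/-- The defining relations of the 0-Hecke algebra `H_n(0)`: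
`π_i² = π_i`, the braid relations, and commutation for `|i-j| ≥ 2`. -/
inductive HeckeRel (n : ℕ) :
    FreeAlgebra ℂ (HIdx n) → FreeAlgebra ℂ (HIdx n) → Prop
  | idem (i : HIdx n) :
      HeckeRel n (FreeAlgebra.ι ℂ i * FreeAlgebra.ι ℂ i) (FreeAlgebra.ι ℂ i)
  | braid (i j : HIdx n) (h : i.1 + 1 = j.1) :
      HeckeRel n (FreeAlgebra.ι ℂ i * FreeAlgebra.ι ℂ j * FreeAlgebra.ι ℂ i)
        (FreeAlgebra.ι ℂ j * FreeAlgebra.ι ℂ i * FreeAlgebra.ι ℂ j)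
  | comm (i j : HIdx n) (h : i.1 + 2 ≤ j.1) :
      HeckeRel n (FreeAlgebra.ι ℂ i * FreeAlgebra.ι ℂ j)
        (FreeAlgebra.ι ℂ j * FreeAlgebra.ι ℂ i)

/-- The 0-Hecke algebra `H_n(0)`, presented by generators and relations. -/
abbrev Hecke0 (n : ℕ) := RingQuot (HeckeRel n)

/-- The generator `π_i` of `H_n(0)`. -/
def piGen (n : ℕ) (i : HIdx n) : Hecke0 n :=
  RingQuot.mkAlgHom ℂ (HeckeRel n) (FreeAlgebra.ι ℂ i)


/-- A composition of `n`: a list of positive integers summing to `n`. -/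
def IsComposition (n : ℕ) (l : List ℕ) : Prop :=
  (∀ x ∈ l, 0 < x) ∧ l.sum = n

/-- The cells of the composition diagram of `α`, as pairs `(row, column)`
(0-based, rows numbered downward). -/
def sitCells (α : List ℕ) : Set (ℕ × ℕ) :=
  {rc | rc.1 < α.length ∧ rc.2 < α.getD rc.1 0}

/-- A standard immaculate tableau of shape `α`, encoded by the position
`p e = (row, column)` of each entry `e ∈ {1,…,n}`: the entries fill the diagram
bijectively, rows increase from left to right, and the first column increases
from top to bottom.  (Entries outside `{1,…,n}` are normalized to `(0,0)`.) -/
def IsSIT (n : ℕ) (α : List ℕ) (p : ℕ → ℕ × ℕ) : Prop :=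
  Set.BijOn p (Set.Icc 1 n) (sitCells α) ∧
  (∀ a ∈ Set.Icc 1 n, ∀ b ∈ Set.Icc 1 n,
    (p a).1 = (p b).1 → (p a).2 < (p b).2 → a < b) ∧
  (∀ a ∈ Set.Icc 1 n, ∀ b ∈ Set.Icc 1 n,
    (p a).2 = 0 → (p b).2 = 0 → (p a).1 < (p b).1 → a < b) ∧
  (∀ e : ℕ, e ∉ Set.Icc 1 n → p e = (0, 0))


namespace S12

lemma swap_mono {i x y : ℕ} (hxy : x < y) (h : ¬(x = i ∧ y = i + 1)) :
    Equiv.swap i (i+1) x < Equiv.swap i (i+1) y := by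
  simp only [Equiv.swap_apply_def]
  split_ifs <;> omega

lemma swap_sit {n : ℕ} {α : List ℕ} {p : ℕ → ℕ × ℕ} (hp : IsSIT n α p) {i : ℕ}
    (h1 : 1 ≤ i) (h2 : i + 1 ≤ n)
    (hrow : (p i).1 ≠ (p (i+1)).1)
    (hcol : ¬((p i).2 = 0 ∧ (p (i+1)).2 = 0)) :
    IsSIT n α (p ∘ Equiv.swap i (i+1)) := by
  obtain ⟨hbij, hr, hc, ho⟩ := hp
  have hmem : ∀ x ∈ Set.Icc 1 n, Equiv.swap i (i+1) x ∈ Set.Icc 1 n := by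
    intro x hx
    simp only [Set.mem_Icc] at *
    simp only [Equiv.swap_apply_def]
    split_ifs <;> omega
  have hinv : ∀ x, Equiv.swap i (i+1) (Equiv.swap i (i+1) x) = x :=
    fun x => Equiv.swap_apply_self i (i+1) x
  refine ⟨hbij.comp ⟨hmem, (Equiv.injective _).injOn, ?_⟩, ?_, ?_, ?_⟩
  · intro y hy
    exact ⟨Equiv.swap i (i+1) y, hmem y hy, hinv y⟩
  · intro a ha b hb he hlt
    have key : Equiv.swap i (i+1) a < Equiv.swap i (i+1) b :=
      hr _ (hmem a ha) _ (hmem b hb) he hlt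
    have hcr : ¬(Equiv.swap i (i+1) a = i ∧ Equiv.swap i (i+1) b = i + 1) := by
      rintro ⟨e1, e2⟩
      exact hrow (by simpa [Function.comp_apply, e1, e2] using he)
    have := swap_mono key hcr
    rwa [hinv, hinv] at this
  · intro a ha b hb hz1 hz2 hlt
    have key : Equiv.swap i (i+1) a < Equiv.swap i (i+1) b :=
      hc _ (hmem a ha) _ (hmem b hb) hz1 hz2 hlt
    have hcr : ¬(Equiv.swap i (i+1) a = i ∧ Equiv.swap i (i+1) b = i + 1) := by
      rintro ⟨e1, e2⟩
      exact hcol ⟨by simpa [Function.comp_apply, e1] using hz1,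
        by simpa [Function.comp_apply, e2] using hz2⟩
    have := swap_mono key hcr
    rwa [hinv, hinv] at this
  · intro e he
    have hne : Equiv.swap i (i+1) e = e := by
      simp only [Set.mem_Icc, not_and, not_le] at he
      exact Equiv.swap_apply_of_ne_of_ne (by omega) (by omega)
    simpa [Function.comp_apply, hne] using ho e he

variable {n : ℕ} {α : List ℕ}

abbrev SITT (n : ℕ) (α : List ℕ) := {p : ℕ → ℕ × ℕ // IsSIT n α p}

lemma cs_left (q : ℕ → ℕ × ℕ) (a : ℕ) : (q ∘ Equiv.swap a (a+1)) a = q (a+1) := by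
  simp

lemma cs_right (q : ℕ → ℕ × ℕ) (a : ℕ) : (q ∘ Equiv.swap a (a+1)) (a+1) = q a := by
  simp

lemma cs_other (q : ℕ → ℕ × ℕ) (a x : ℕ) (h1 : x ≠ a) (h2 : x ≠ a+1) :
    (q ∘ Equiv.swap a (a+1)) x = q x := by
  simp [Function.comp_apply, Equiv.swap_apply_of_ne_of_ne h1 h2]

noncomputable def fmap (i : HIdx n) (T : SITT n α) : SITT n α →₀ ℂ :=
  if hd : (T.1 i.1).1 < (T.1 (i.1+1)).1 then
    if hc : (T.1 i.1).2 = 0 ∧ (T.1 (i.1+1)).2 = 0 then 0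
    else Finsupp.single ⟨T.1 ∘ Equiv.swap i.1 (i.1+1),
      swap_sit T.2 i.2.1 i.2.2 (Nat.ne_of_lt hd) hc⟩ 1
  else Finsupp.single T 1

noncomputable def opL (i : HIdx n) : (SITT n α →₀ ℂ) →ₗ[ℂ] (SITT n α →₀ ℂ) :=
  Finsupp.lift _ ℂ _ (fmap i)

lemma opL_single (i : HIdx n) (T : SITT n α) (c : ℂ) :
    opL i (Finsupp.single T c) = c • fmap i T := by
  simp [opL, Finsupp.lift_apply, Finsupp.sum_single_index]

lemma fmap_of_not_des (i : HIdx n) (T : SITT n α)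
    (h : ¬ (T.1 i.1).1 < (T.1 (i.1+1)).1) : fmap i T = Finsupp.single T 1 :=
  dif_neg h

lemma fmap_of_bc (i : HIdx n) (T : SITT n α)
    (hd : (T.1 i.1).1 < (T.1 (i.1+1)).1)
    (hc : (T.1 i.1).2 = 0 ∧ (T.1 (i.1+1)).2 = 0) : fmap i T = 0 := by
  rw [fmap, dif_pos hd, dif_pos hc]

lemma fmap_of_swap (i : HIdx n) (T : SITT n α)
    (hd : (T.1 i.1).1 < (T.1 (i.1+1)).1)
    (hc : ¬ ((T.1 i.1).2 = 0 ∧ (T.1 (i.1+1)).2 = 0)) :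
    fmap i T = Finsupp.single ⟨T.1 ∘ Equiv.swap i.1 (i.1+1),
      swap_sit T.2 i.2.1 i.2.2 (Nat.ne_of_lt hd) hc⟩ 1 := by
  rw [fmap, dif_pos hd, dif_neg hc]

lemma key_idem (i : HIdx n) (T : SITT n α) : opL i (fmap i T) = fmap i T := by
  by_cases hd : (T.1 i.1).1 < (T.1 (i.1+1)).1
  · by_cases hc : (T.1 i.1).2 = 0 ∧ (T.1 (i.1+1)).2 = 0
    · rw [fmap_of_bc i T hd hc]; simp
    · rw [fmap_of_swap i T hd hc, opL_single, one_smul]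
      apply fmap_of_not_des
      show ¬ ((T.1 ∘ Equiv.swap i.1 (i.1+1)) i.1).1 < ((T.1 ∘ Equiv.swap i.1 (i.1+1)) (i.1+1)).1
      rw [cs_left, cs_right]
      omega
  · rw [fmap_of_not_des i T hd, opL_single, one_smul, fmap_of_not_des i T hd]

lemma key_comm (i j : HIdx n) (h : i.1 + 2 ≤ j.1) (T : SITT n α) :
    opL i (fmap j T) = opL j (fmap i T) := by
  obtain ⟨a, ha⟩ := i; obtain ⟨b, hb⟩ := j
  simp only at h
  have opL_single : ∀ (a' : ℕ) (ha' : 1 ≤ a' ∧ a' + 1 ≤ n) (T : SITT n α) (c : ℂ),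
      opL (n := n) (α := α) (⟨a', ha'⟩ : {i : ℕ // 1 ≤ i ∧ i + 1 ≤ n}) (Finsupp.single T c)
        = c • fmap ⟨a', ha'⟩ T := fun a' ha' T c => S12.opL_single _ T c
  set p := T.1 with hp
  have E1 : (p ∘ Equiv.swap a (a+1)) b = p b := cs_other _ _ _ (by omega) (by omega)
  have E2 : (p ∘ Equiv.swap a (a+1)) (b+1) = p (b+1) := cs_other _ _ _ (by omega) (by omega)
  have E3 : (p ∘ Equiv.swap b (b+1)) a = p a := cs_other _ _ _ (by omega) (by omega)
  have E4 : (p ∘ Equiv.swap b (b+1)) (a+1) = p (a+1) := cs_other _ _ _ (by omega) (by omega)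
  by_cases dj : (p b).1 < (p (b+1)).1
  · by_cases cj : (p b).2 = 0 ∧ (p (b+1)).2 = 0
    · rw [fmap_of_bc ⟨b,hb⟩ T dj cj]
      simp only [map_zero]
      by_cases di : (p a).1 < (p (a+1)).1
      · by_cases ci : (p a).2 = 0 ∧ (p (a+1)).2 = 0
        · rw [fmap_of_bc ⟨a,ha⟩ T di ci]; simp
        · rw [fmap_of_swap ⟨a,ha⟩ T di ci, opL_single, one_smul,
              fmap_of_bc ⟨b,hb⟩ _ (by show ((p ∘ Equiv.swap a (a+1)) b).1 < ((p ∘ Equiv.swap a (a+1)) (b+1)).1; rw [E1, E2]; exact dj)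
                (by show ((p ∘ Equiv.swap a (a+1)) b).2 = 0 ∧ ((p ∘ Equiv.swap a (a+1)) (b+1)).2 = 0; rw [E1, E2]; exact cj)]
      · rw [fmap_of_not_des ⟨a,ha⟩ T di, opL_single, one_smul, fmap_of_bc ⟨b,hb⟩ T dj cj]
    · rw [fmap_of_swap ⟨b,hb⟩ T dj cj, opL_single, one_smul]
      by_cases di : (p a).1 < (p (a+1)).1
      · by_cases ci : (p a).2 = 0 ∧ (p (a+1)).2 = 0
        · rw [fmap_of_bc ⟨a,ha⟩ _ (by show ((p ∘ Equiv.swap b (b+1)) a).1 < ((p ∘ Equiv.swap b (b+1)) (a+1)).1; rw [E3, E4]; exact di)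
                (by show ((p ∘ Equiv.swap b (b+1)) a).2 = 0 ∧ ((p ∘ Equiv.swap b (b+1)) (a+1)).2 = 0; rw [E3, E4]; exact ci),
              fmap_of_bc ⟨a,ha⟩ T di ci]
          simp
        · rw [fmap_of_swap ⟨a,ha⟩ _ (by show ((p ∘ Equiv.swap b (b+1)) a).1 < ((p ∘ Equiv.swap b (b+1)) (a+1)).1; rw [E3, E4]; exact di)
                (by show ¬(((p ∘ Equiv.swap b (b+1)) a).2 = 0 ∧ ((p ∘ Equiv.swap b (b+1)) (a+1)).2 = 0); rw [E3, E4]; exact ci),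
              fmap_of_swap ⟨a,ha⟩ T di ci, opL_single, one_smul,
              fmap_of_swap ⟨b,hb⟩ _ (by show ((p ∘ Equiv.swap a (a+1)) b).1 < ((p ∘ Equiv.swap a (a+1)) (b+1)).1; rw [E1, E2]; exact dj)
                (by show ¬(((p ∘ Equiv.swap a (a+1)) b).2 = 0 ∧ ((p ∘ Equiv.swap a (a+1)) (b+1)).2 = 0); rw [E1, E2]; exact cj)]
          congr 1
          apply Subtype.ext
          funext x
          show p (Equiv.swap b (b+1) (Equiv.swap a (a+1) x)) = p (Equiv.swap a (a+1) (Equiv.swap b (b+1) x))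
          congr 1
          simp only [Equiv.swap_apply_def]
          split_ifs <;> omega
      · rw [fmap_of_not_des ⟨a,ha⟩ _ (by show ¬((p ∘ Equiv.swap b (b+1)) a).1 < ((p ∘ Equiv.swap b (b+1)) (a+1)).1; rw [E3, E4]; exact di),
            fmap_of_not_des ⟨a,ha⟩ T di, opL_single, one_smul, fmap_of_swap ⟨b,hb⟩ T dj cj]
  · rw [fmap_of_not_des ⟨b,hb⟩ T dj, opL_single, one_smul]
    by_cases di : (p a).1 < (p (a+1)).1
    · by_cases ci : (p a).2 = 0 ∧ (p (a+1)).2 = 0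
      · rw [fmap_of_bc ⟨a,ha⟩ T di ci]; simp
      · rw [fmap_of_swap ⟨a,ha⟩ T di ci, opL_single, one_smul,
            fmap_of_not_des ⟨b,hb⟩ _ (by show ¬((p ∘ Equiv.swap a (a+1)) b).1 < ((p ∘ Equiv.swap a (a+1)) (b+1)).1; rw [E1, E2]; exact dj)]
    · rw [fmap_of_not_des ⟨a,ha⟩ T di, opL_single, one_smul, fmap_of_not_des ⟨b,hb⟩ T dj]


set_option maxHeartbeats 2000000 in
lemma key_braid (i j : HIdx n) (h : i.1 + 1 = j.1) (T : SITT n α) :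
    opL i (opL j (fmap i T)) = opL j (opL i (fmap j T)) := by
  obtain ⟨a, ha⟩ := i; obtain ⟨b, hb⟩ := j
  simp only at h
  subst h
  have opL_single : ∀ (a' : ℕ) (ha' : 1 ≤ a' ∧ a' + 1 ≤ n) (T : SITT n α) (c : ℂ),
      opL (n := n) (α := α) (⟨a', ha'⟩ : {i : ℕ // 1 ≤ i ∧ i + 1 ≤ n}) (Finsupp.single T c)
        = c • fmap ⟨a', ha'⟩ T := fun a' ha' T c => S12.opL_single _ T c
  set p := T.1 with hp
  -- single-swap evaluations
  have A1 : (p ∘ Equiv.swap a (a+1)) a = p (a+1) := cs_left p a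
  have A2 : (p ∘ Equiv.swap a (a+1)) (a+1) = p a := cs_right p a
  have A3 : (p ∘ Equiv.swap a (a+1)) (a+1+1) = p (a+1+1) := cs_other p a (a+1+1) (by omega) (by omega)
  have B1 : (p ∘ Equiv.swap (a+1) (a+1+1)) a = p a := cs_other p (a+1) a (by omega) (by omega)
  have B2 : (p ∘ Equiv.swap (a+1) (a+1+1)) (a+1) = p (a+1+1) := cs_left p (a+1)
  have B3 : (p ∘ Equiv.swap (a+1) (a+1+1)) (a+1+1) = p (a+1) := cs_right p (a+1)
  have C1 : ((p ∘ Equiv.swap a (a+1)) ∘ Equiv.swap (a+1) (a+1+1)) a = p (a+1) :=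
    (cs_other _ (a+1) a (by omega) (by omega)).trans A1
  have C2 : ((p ∘ Equiv.swap a (a+1)) ∘ Equiv.swap (a+1) (a+1+1)) (a+1) = p (a+1+1) :=
    (cs_left _ (a+1)).trans A3
  have C3 : ((p ∘ Equiv.swap a (a+1)) ∘ Equiv.swap (a+1) (a+1+1)) (a+1+1) = p a :=
    (cs_right _ (a+1)).trans A2
  have D1 : ((p ∘ Equiv.swap (a+1) (a+1+1)) ∘ Equiv.swap a (a+1)) a = p (a+1+1) :=
    (cs_left _ a).trans B2
  have D2 : ((p ∘ Equiv.swap (a+1) (a+1+1)) ∘ Equiv.swap a (a+1)) (a+1) = p a :=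
    (cs_right _ a).trans B1
  have D3 : ((p ∘ Equiv.swap (a+1) (a+1+1)) ∘ Equiv.swap a (a+1)) (a+1+1) = p (a+1) :=
    (cs_other _ a (a+1+1) (by omega) (by omega)).trans B3
  by_cases d1 : (p a).1 < (p (a+1)).1
  · by_cases d2 : (p (a+1)).1 < (p (a+1+1)).1
    · -- case D : both descents, r1 < r2 < r3
      by_cases zab : (p a).2 = 0 ∧ (p (a+1)).2 = 0
      · -- D1 : fmap ia T = 0, LHS = 0
        rw [fmap_of_bc ⟨a,ha⟩ T d1 zab]
        simp only [map_zero]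
        by_cases zbc : (p (a+1)).2 = 0 ∧ (p (a+1+1)).2 = 0
        · rw [fmap_of_bc ⟨a+1,hb⟩ T d2 zbc]; simp
        · rw [fmap_of_swap ⟨a+1,hb⟩ T d2 zbc, opL_single, one_smul,
            fmap_of_swap ⟨a,ha⟩ _
              (by show ((p ∘ Equiv.swap (a+1) (a+1+1)) a).1 < ((p ∘ Equiv.swap (a+1) (a+1+1)) (a+1)).1
                  rw [B1, B2]; omega)
              (by show ¬(((p ∘ Equiv.swap (a+1) (a+1+1)) a).2 = 0 ∧ ((p ∘ Equiv.swap (a+1) (a+1+1)) (a+1)).2 = 0)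
                  rw [B1, B2]; rintro ⟨u, v⟩; exact zbc ⟨zab.2, v⟩),
            opL_single, one_smul,
            fmap_of_bc ⟨a+1,hb⟩ _
              (by show (((p ∘ Equiv.swap (a+1) (a+1+1)) ∘ Equiv.swap a (a+1)) (a+1)).1 < (((p ∘ Equiv.swap (a+1) (a+1+1)) ∘ Equiv.swap a (a+1)) (a+1+1)).1
                  rw [D2, D3]; exact d1)
              (by show (((p ∘ Equiv.swap (a+1) (a+1+1)) ∘ Equiv.swap a (a+1)) (a+1)).2 = 0 ∧ (((p ∘ Equiv.swap (a+1) (a+1+1)) ∘ Equiv.swap a (a+1)) (a+1+1)).2 = 0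
                  rw [D2, D3]; exact zab)]
      · by_cases zbc : (p (a+1)).2 = 0 ∧ (p (a+1+1)).2 = 0
        · -- D2 : RHS = 0
          rw [fmap_of_bc ⟨a+1,hb⟩ T d2 zbc]
          simp only [map_zero]
          rw [fmap_of_swap ⟨a,ha⟩ T d1 zab, opL_single, one_smul,
            fmap_of_swap ⟨a+1,hb⟩ _
              (by show ((p ∘ Equiv.swap a (a+1)) (a+1)).1 < ((p ∘ Equiv.swap a (a+1)) (a+1+1)).1
                  rw [A2, A3]; omega)
              (by show ¬(((p ∘ Equiv.swap a (a+1)) (a+1)).2 = 0 ∧ ((p ∘ Equiv.swap a (a+1)) (a+1+1)).2 = 0)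
                  rw [A2, A3]; rintro ⟨u, v⟩; exact zab ⟨u, zbc.1⟩),
            opL_single, one_smul,
            fmap_of_bc ⟨a,ha⟩ _
              (by show (((p ∘ Equiv.swap a (a+1)) ∘ Equiv.swap (a+1) (a+1+1)) a).1 < (((p ∘ Equiv.swap a (a+1)) ∘ Equiv.swap (a+1) (a+1+1)) (a+1)).1
                  rw [C1, C2]; exact d2)
              (by show (((p ∘ Equiv.swap a (a+1)) ∘ Equiv.swap (a+1) (a+1+1)) a).2 = 0 ∧ (((p ∘ Equiv.swap a (a+1)) ∘ Equiv.swap (a+1) (a+1+1)) (a+1)).2 = 0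
                  rw [C1, C2]; exact zbc)]
        · by_cases zac : (p a).2 = 0 ∧ (p (a+1+1)).2 = 0
          · -- D3i : both sides 0
            rw [fmap_of_swap ⟨a,ha⟩ T d1 zab, fmap_of_swap ⟨a+1,hb⟩ T d2 zbc,
              opL_single, one_smul, opL_single, one_smul,
              fmap_of_bc ⟨a+1,hb⟩ _
                (by show ((p ∘ Equiv.swap a (a+1)) (a+1)).1 < ((p ∘ Equiv.swap a (a+1)) (a+1+1)).1
                    rw [A2, A3]; omega)
                (by show ((p ∘ Equiv.swap a (a+1)) (a+1)).2 = 0 ∧ ((p ∘ Equiv.swap a (a+1)) (a+1+1)).2 = 0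
                    rw [A2, A3]; exact zac),
              fmap_of_bc ⟨a,ha⟩ _
                (by show ((p ∘ Equiv.swap (a+1) (a+1+1)) a).1 < ((p ∘ Equiv.swap (a+1) (a+1+1)) (a+1)).1
                    rw [B1, B2]; omega)
                (by show ((p ∘ Equiv.swap (a+1) (a+1+1)) a).2 = 0 ∧ ((p ∘ Equiv.swap (a+1) (a+1+1)) (a+1)).2 = 0
                    rw [B1, B2]; exact zac)]
            simp
          · -- D3ii : both sides are the triple swap
            rw [fmap_of_swap ⟨a,ha⟩ T d1 zab, fmap_of_swap ⟨a+1,hb⟩ T d2 zbc,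
              opL_single, one_smul, opL_single, one_smul,
              fmap_of_swap ⟨a+1,hb⟩ _
                (by show ((p ∘ Equiv.swap a (a+1)) (a+1)).1 < ((p ∘ Equiv.swap a (a+1)) (a+1+1)).1
                    rw [A2, A3]; omega)
                (by show ¬(((p ∘ Equiv.swap a (a+1)) (a+1)).2 = 0 ∧ ((p ∘ Equiv.swap a (a+1)) (a+1+1)).2 = 0)
                    rw [A2, A3]; exact zac),
              fmap_of_swap ⟨a,ha⟩ _
                (by show ((p ∘ Equiv.swap (a+1) (a+1+1)) a).1 < ((p ∘ Equiv.swap (a+1) (a+1+1)) (a+1)).1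
                    rw [B1, B2]; omega)
                (by show ¬(((p ∘ Equiv.swap (a+1) (a+1+1)) a).2 = 0 ∧ ((p ∘ Equiv.swap (a+1) (a+1+1)) (a+1)).2 = 0)
                    rw [B1, B2]; exact zac),
              opL_single, one_smul, opL_single, one_smul,
              fmap_of_swap ⟨a,ha⟩ _
                (by show (((p ∘ Equiv.swap a (a+1)) ∘ Equiv.swap (a+1) (a+1+1)) a).1 < (((p ∘ Equiv.swap a (a+1)) ∘ Equiv.swap (a+1) (a+1+1)) (a+1)).1
                    rw [C1, C2]; exact d2)
                (by show ¬((((p ∘ Equiv.swap a (a+1)) ∘ Equiv.swap (a+1) (a+1+1)) a).2 = 0 ∧ (((p ∘ Equiv.swap a (a+1)) ∘ Equiv.swap (a+1) (a+1+1)) (a+1)).2 = 0)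
                    rw [C1, C2]; exact zbc),
              fmap_of_swap ⟨a+1,hb⟩ _
                (by show (((p ∘ Equiv.swap (a+1) (a+1+1)) ∘ Equiv.swap a (a+1)) (a+1)).1 < (((p ∘ Equiv.swap (a+1) (a+1+1)) ∘ Equiv.swap a (a+1)) (a+1+1)).1
                    rw [D2, D3]; exact d1)
                (by show ¬((((p ∘ Equiv.swap (a+1) (a+1+1)) ∘ Equiv.swap a (a+1)) (a+1)).2 = 0 ∧ (((p ∘ Equiv.swap (a+1) (a+1+1)) ∘ Equiv.swap a (a+1)) (a+1+1)).2 = 0)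
                    rw [D2, D3]; exact zab)]
            congr 1
            apply Subtype.ext
            funext x
            show p (Equiv.swap a (a+1) (Equiv.swap (a+1) (a+1+1) (Equiv.swap a (a+1) x)))
              = p (Equiv.swap (a+1) (a+1+1) (Equiv.swap a (a+1) (Equiv.swap (a+1) (a+1+1) x)))
            congr 1
            simp only [Equiv.swap_apply_def]
            split_ifs <;> omega
    · -- case C : d1, ¬d2
      rw [fmap_of_not_des ⟨a+1,hb⟩ T d2, opL_single, one_smul]
      by_cases zab : (p a).2 = 0 ∧ (p (a+1)).2 = 0
      · rw [fmap_of_bc ⟨a,ha⟩ T d1 zab]; simp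
      · rw [fmap_of_swap ⟨a,ha⟩ T d1 zab, opL_single, one_smul]
        by_cases hr13 : (p a).1 < (p (a+1+1)).1
        · by_cases zac : (p a).2 = 0 ∧ (p (a+1+1)).2 = 0
          · rw [fmap_of_bc ⟨a+1,hb⟩ _
                (by show ((p ∘ Equiv.swap a (a+1)) (a+1)).1 < ((p ∘ Equiv.swap a (a+1)) (a+1+1)).1
                    rw [A2, A3]; exact hr13)
                (by show ((p ∘ Equiv.swap a (a+1)) (a+1)).2 = 0 ∧ ((p ∘ Equiv.swap a (a+1)) (a+1+1)).2 = 0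
                    rw [A2, A3]; exact zac)]
            simp
          · rw [fmap_of_swap ⟨a+1,hb⟩ _
                (by show ((p ∘ Equiv.swap a (a+1)) (a+1)).1 < ((p ∘ Equiv.swap a (a+1)) (a+1+1)).1
                    rw [A2, A3]; exact hr13)
                (by show ¬(((p ∘ Equiv.swap a (a+1)) (a+1)).2 = 0 ∧ ((p ∘ Equiv.swap a (a+1)) (a+1+1)).2 = 0)
                    rw [A2, A3]; exact zac),
              opL_single, one_smul,
              fmap_of_not_des ⟨a,ha⟩ _
                (by show ¬(((p ∘ Equiv.swap a (a+1)) ∘ Equiv.swap (a+1) (a+1+1)) a).1 < (((p ∘ Equiv.swap a (a+1)) ∘ Equiv.swap (a+1) (a+1+1)) (a+1)).1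
                    rw [C1, C2]; exact d2)]
        · rw [fmap_of_not_des ⟨a+1,hb⟩ _
              (by show ¬((p ∘ Equiv.swap a (a+1)) (a+1)).1 < ((p ∘ Equiv.swap a (a+1)) (a+1+1)).1
                  rw [A2, A3]; exact hr13),
            opL_single, one_smul,
            fmap_of_not_des ⟨a,ha⟩ _
              (by show ¬((p ∘ Equiv.swap a (a+1)) a).1 < ((p ∘ Equiv.swap a (a+1)) (a+1)).1
                  rw [A1, A2]; omega)]
  · by_cases d2 : (p (a+1)).1 < (p (a+1+1)).1
    · -- case B : ¬d1, d2
      rw [fmap_of_not_des ⟨a,ha⟩ T d1, opL_single, one_smul]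
      by_cases zbc : (p (a+1)).2 = 0 ∧ (p (a+1+1)).2 = 0
      · rw [fmap_of_bc ⟨a+1,hb⟩ T d2 zbc]; simp
      · rw [fmap_of_swap ⟨a+1,hb⟩ T d2 zbc, opL_single, one_smul]
        by_cases hr13 : (p a).1 < (p (a+1+1)).1
        · by_cases zac : (p a).2 = 0 ∧ (p (a+1+1)).2 = 0
          · rw [fmap_of_bc ⟨a,ha⟩ _
                (by show ((p ∘ Equiv.swap (a+1) (a+1+1)) a).1 < ((p ∘ Equiv.swap (a+1) (a+1+1)) (a+1)).1
                    rw [B1, B2]; exact hr13)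
                (by show ((p ∘ Equiv.swap (a+1) (a+1+1)) a).2 = 0 ∧ ((p ∘ Equiv.swap (a+1) (a+1+1)) (a+1)).2 = 0
                    rw [B1, B2]; exact zac)]
            simp
          · rw [fmap_of_swap ⟨a,ha⟩ _
                (by show ((p ∘ Equiv.swap (a+1) (a+1+1)) a).1 < ((p ∘ Equiv.swap (a+1) (a+1+1)) (a+1)).1
                    rw [B1, B2]; exact hr13)
                (by show ¬(((p ∘ Equiv.swap (a+1) (a+1+1)) a).2 = 0 ∧ ((p ∘ Equiv.swap (a+1) (a+1+1)) (a+1)).2 = 0)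
                    rw [B1, B2]; exact zac),
              opL_single, one_smul,
              fmap_of_not_des ⟨a+1,hb⟩ _
                (by show ¬(((p ∘ Equiv.swap (a+1) (a+1+1)) ∘ Equiv.swap a (a+1)) (a+1)).1 < (((p ∘ Equiv.swap (a+1) (a+1+1)) ∘ Equiv.swap a (a+1)) (a+1+1)).1
                    rw [D2, D3]; exact d1)]
        · rw [fmap_of_not_des ⟨a,ha⟩ _
              (by show ¬((p ∘ Equiv.swap (a+1) (a+1+1)) a).1 < ((p ∘ Equiv.swap (a+1) (a+1+1)) (a+1)).1
                  rw [B1, B2]; exact hr13),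
            opL_single, one_smul,
            fmap_of_not_des ⟨a+1,hb⟩ _
              (by show ¬((p ∘ Equiv.swap (a+1) (a+1+1)) (a+1)).1 < ((p ∘ Equiv.swap (a+1) (a+1+1)) (a+1+1)).1
                  rw [B2, B3]; omega)]
    · -- case A : no descents
      rw [fmap_of_not_des ⟨a,ha⟩ T d1, fmap_of_not_des ⟨a+1,hb⟩ T d2,
        opL_single, one_smul, opL_single, one_smul,
        fmap_of_not_des ⟨a+1,hb⟩ T d2, fmap_of_not_des ⟨a,ha⟩ T d1,
        opL_single, one_smul, opL_single, one_smul,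
        fmap_of_not_des ⟨a,ha⟩ T d1, fmap_of_not_des ⟨a+1,hb⟩ T d2]


end S12

/-- the rules `π_i·𝒯 = 𝒯` if `i ∉ Des(𝒯)`, `π_i·𝒯 = 0` if `i` and
`i+1` both lie in the first column, and `π_i·𝒯 = s_i·𝒯` otherwise, satisfy the
defining relations of `H_n(0)`, i.e. they define an `H_n(0)`-module structure
`𝒱_α` on the ℂ-span of the standard immaculate tableaux of shape `α`.
(Here `i ∈ Des(𝒯)` iff `i` lies strictly above `i+1`, i.e. `row(i) < row(i+1)`.) -/
theorem stmt12 (n : ℕ) (α : List ℕ) (hα : IsComposition n α) :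
    ∃ act : Hecke0 n →ₐ[ℂ] Module.End ℂ ({p : ℕ → ℕ × ℕ // IsSIT n α p} →₀ ℂ),
      ∀ i : HIdx n, ∀ T : {p : ℕ → ℕ × ℕ // IsSIT n α p},
        (¬ (T.1 i.1).1 < (T.1 (i.1 + 1)).1 →
          act (piGen n i) (Finsupp.single T 1) = Finsupp.single T 1) ∧
        ((T.1 i.1).1 < (T.1 (i.1 + 1)).1 →
          (T.1 i.1).2 = 0 → (T.1 (i.1 + 1)).2 = 0 →
          act (piGen n i) (Finsupp.single T 1) = 0) ∧
        ((T.1 i.1).1 < (T.1 (i.1 + 1)).1 →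
          ¬ ((T.1 i.1).2 = 0 ∧ (T.1 (i.1 + 1)).2 = 0) →
          ∃ T' : {p : ℕ → ℕ × ℕ // IsSIT n α p},
            T'.1 = T.1 ∘ (Equiv.swap i.1 (i.1 + 1)) ∧
            act (piGen n i) (Finsupp.single T 1) = Finsupp.single T' 1) := by
  classical
  have hrel : ∀ ⦃x y : FreeAlgebra ℂ (HIdx n)⦄, HeckeRel n x y →
      (FreeAlgebra.lift ℂ (fun i : HIdx n => S12.opL (n := n) (α := α) i)) x
      = (FreeAlgebra.lift ℂ (fun i : HIdx n => S12.opL (n := n) (α := α) i)) y := by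
    intro x y hxy
    induction hxy with
    | idem i =>
      simp only [map_mul, FreeAlgebra.lift_ι_apply]
      apply Finsupp.lhom_ext
      intro T c
      simp only [Module.End.mul_apply, S12.opL_single, map_smul, S12.key_idem]
    | braid i j h =>
      simp only [map_mul, FreeAlgebra.lift_ι_apply]
      apply Finsupp.lhom_ext
      intro T c
      simp only [Module.End.mul_apply, S12.opL_single, map_smul]
      rw [S12.key_braid i j h T]
    | comm i j h =>
      simp only [map_mul, FreeAlgebra.lift_ι_apply]
      apply Finsupp.lhom_ext
      intro T c
      simp only [Module.End.mul_apply, S12.opL_single, map_smul]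
      rw [S12.key_comm i j h T]
  refine ⟨RingQuot.liftAlgHom ℂ ⟨FreeAlgebra.lift ℂ
    (fun i : HIdx n => S12.opL (n := n) (α := α) i), hrel⟩, ?_⟩
  intro i T
  have hgen : ∀ v, (RingQuot.liftAlgHom ℂ ⟨FreeAlgebra.lift ℂ
      (fun i : HIdx n => S12.opL (n := n) (α := α) i), hrel⟩) (piGen n i) v
      = S12.opL i v := by
    intro v
    rw [piGen, RingQuot.liftAlgHom_mkAlgHom_apply, FreeAlgebra.lift_ι_apply]
  refine ⟨?_, ?_, ?_⟩
  · intro h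
    rw [hgen, S12.opL_single, one_smul, S12.fmap_of_not_des i T h]
  · intro hd h1 h2
    rw [hgen, S12.opL_single, one_smul, S12.fmap_of_bc i T hd ⟨h1, h2⟩]
  · intro hd hc
    exact ⟨⟨T.1 ∘ Equiv.swap i.1 (i.1+1),
      S12.swap_sit T.2 i.2.1 i.2.2 (Nat.ne_of_lt hd) hc⟩, rfl,
      by rw [hgen, S12.opL_single, one_smul, S12.fmap_of_swap i T hd hc]⟩
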